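/- Let k be a field, a ∈ k \ {0}, and let c, d ∈ k with (c,d) ≠ (0,0). Set b = c(x + a/x) + d ∈ k(x). Let σ be the k-automorphism of k(x,y) with σ(x) = a/x and σ(y) = b/y. Then k(x,y)^⟨σ⟩ = k(u,v), where u = (x − a/x)/(xy − ab/(xy)) and v = (y − b/y)/(xy − ab/(xy)). -/

import Mathlib

open IntermediateField Polynomial Module

section Aux

variable {k F : Type} [Field k] [Field F] [Algebra k F]

lemma aux_fixmem (σ : F ≃ₐ[k] F) (z : F) (hz : σ z = z) :
    z ∈ IntermediateField.fixedField (Subgroup.zpowers σ) := by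
  intro g
  have hst : Subgroup.zpowers σ ≤ MulAction.stabilizer (F ≃ₐ[k] F) z :=
    Subgroup.zpowers_le.mpr (by simpa [MulAction.mem_stabilizer_iff] using hz)
  exact hst g.2

lemma aux_artin (σ : F ≃ₐ[k] F) (hσ2 : σ * σ = 1) (hσne : σ ≠ 1) :
    finrank (IntermediateField.fixedField (Subgroup.zpowers σ)) F = 2 := by
  have horder : orderOf σ = 2 := by
    haveI : Fact (Nat.Prime 2) := ⟨by norm_num⟩
    exact orderOf_eq_prime (by rw [pow_two]; exact hσ2) hσne
  have hfin : (Subgroup.zpowers σ : Set (F ≃ₐ[k] F)).Finite := by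
    refine IsOfFinOrder.finite_zpowers ?_
    rw [← orderOf_pos_iff, horder]; norm_num
  haveI : Finite ↥(Subgroup.zpowers σ) := hfin.to_subtype
  letI : Fintype ↥(Subgroup.zpowers σ) := Fintype.ofFinite _
  have h := FixedPoints.finrank_eq_card (Subgroup.zpowers σ) F
  rw [← Nat.card_eq_fintype_card, Nat.card_zpowers, horder] at h
  exact h

lemma aux_finish (K L : IntermediateField k F) (hKL : K ≤ L)
    (hL2 : finrank L F = 2) (x y : F)
    (hadj : IntermediateField.adjoin k {x, y} = ⊤)
    (q : Polynomial K) (hqne : q ≠ 0) (hdeg : q.natDegree ≤ 2)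
    (haev : Polynomial.aeval x q = 0)
    (hyT : y ∈ IntermediateField.adjoin K ({x} : Set F)) : K = L := by
  have hxint : IsIntegral K x := (isAlgebraic_iff_isIntegral.mp ⟨q, hqne, haev⟩)
  have hTtop : IntermediateField.adjoin K ({x} : Set F) = ⊤ := by
    rw [eq_top_iff]
    intro z _
    have hz : z ∈ IntermediateField.adjoin k ({x, y} : Set F) := by rw [hadj]; trivial
    have hle : IntermediateField.adjoin k ({x, y} : Set F) ≤
        IntermediateField.restrictScalars k (IntermediateField.adjoin K ({x} : Set F)) := by
      have m1 : x ∈ IntermediateField.restrictScalars k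
          (IntermediateField.adjoin K ({x} : Set F)) :=
        (IntermediateField.mem_restrictScalars k).mpr (IntermediateField.subset_adjoin K {x} rfl)
      have m2 : y ∈ IntermediateField.restrictScalars k
          (IntermediateField.adjoin K ({x} : Set F)) :=
        (IntermediateField.mem_restrictScalars k).mpr hyT
      refine IntermediateField.adjoin_le_iff.mpr ?_
      rintro w (rfl | rfl)
      · exact m1
      · exact m2
    exact hle hz
  haveI hfd1 : FiniteDimensional K (IntermediateField.adjoin K ({x} : Set F)) :=
    IntermediateField.adjoin.finiteDimensional hxint
  haveI hfd2 : FiniteDimensional K F := by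
    rw [hTtop] at hfd1
    exact Module.Finite.equiv IntermediateField.topEquiv.toLinearEquiv
  have hfr : finrank K F ≤ 2 := by
    have e1 : finrank K F = finrank K (IntermediateField.adjoin K ({x} : Set F)) := by
      rw [hTtop]
      exact (IntermediateField.topEquiv.toLinearEquiv.finrank_eq).symm
    have e3 : (minpoly K x).natDegree ≤ q.natDegree :=
      Polynomial.natDegree_le_natDegree (minpoly.degree_le_of_ne_zero K x hqne haev)
    rw [e1, IntermediateField.adjoin.finrank hxint]
    exact e3.trans hdeg
  exact IntermediateField.eq_of_le_of_finrank_le' hKL (hL2 ▸ hfr)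

end Aux

set_option maxHeartbeats 2000000 in
set_option synthInstance.maxHeartbeats 200000 in
/-- Lemma (Hajja–Kang / Kang): for `σ : x ↦ a/x, y ↦ b/y` on `k(x,y)`, where
`b = c(x + a/x) + d` with `(c,d) ≠ (0,0)`, one has `k(x,y)^⟨σ⟩ = k(u,v)` with
`u = (x - a/x)/(xy - ab/(xy))` and `v = (y - b/y)/(xy - ab/(xy))`. -/
theorem stmt1 (k F : Type) [Field k] [Field F] [Algebra k F]
    (a : k) (ha : a ≠ 0) (c d : k) (hcd : ¬(c = 0 ∧ d = 0))
    (x y : F) (hind : AlgebraicIndependent k ![x, y])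
    (hadj : IntermediateField.adjoin k {x, y} = ⊤)
    (b : F)
    (hb : b = algebraMap k F c * (x + algebraMap k F a / x) + algebraMap k F d)
    (σ : F ≃ₐ[k] F)
    (hx : σ x = algebraMap k F a / x) (hy : σ y = b / y) :
    IntermediateField.fixedField (Subgroup.zpowers σ) =
      IntermediateField.adjoin k
        {(x - algebraMap k F a / x) / (x * y - algebraMap k F a * b / (x * y)),
         (y - b / y) / (x * y - algebraMap k F a * b / (x * y))} := by
  subst hb
  set A := algebraMap k F a with hA
  set C := algebraMap k F c with hC
  set D := algebraMap k F d with hD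
  set b : F := C * (x + A / x) + D with hb
  set u : F := (x - A / x) / (x * y - A * b / (x * y)) with hu
  set v : F := (y - b / y) / (x * y - A * b / (x * y)) with hv
  -- basic nonvanishing
  have h1 : x ≠ 0 := by simpa using hind.ne_zero 0
  have h2 : y ≠ 0 := by simpa using hind.ne_zero 1
  have hAne : A ≠ 0 := by
    rw [hA]
    intro h0
    exact ha ((algebraMap k F).injective (by rw [h0, map_zero]))
  have hTx : Transcendental k x := by simpa using hind.transcendental 0
  have hTy : Transcendental (Algebra.adjoin k ({x} : Set F)) y := by
    have hx1 : AlgebraicIndependent k ![x] := by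
      have h0 := hind.comp (fun _ : Fin 1 => 0) (fun p q _ => Subsingleton.elim p q)
      have he : (![x, y] ∘ fun _ : Fin 1 => 0) = ![x] := by
        funext i
        simp [Matrix.cons_val_fin_one]
      rwa [he] at h0
    have hopt : AlgebraicIndependent k (fun o : Option (Fin 1) => o.elim y ![x]) := by
      refine (algebraicIndependent_equiv'
        (⟨fun o => o.elim 1 (fun _ => 0), fun i => if i = 0 then some 0 else none,
          fun o => by
            rcases o with _ | i
            · rfl
            · exact congrArg some (Subsingleton.elim _ _),
          fun i => by fin_cases i <;> rfl⟩ : Option (Fin 1) ≃ Fin 2) ?_).mpr hind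
      funext o
      rcases o with _ | i
      · simp
      · simp [Matrix.cons_val_fin_one]
    have hT := (hx1.option_iff_transcendental y).mp hopt
    have hr : Set.range ![x] = ({x} : Set F) := by
      ext w
      constructor
      · rintro ⟨i, rfl⟩
        simp [Matrix.cons_val_fin_one]
      · rintro rfl
        exact ⟨0, rfl⟩
    rwa [hr] at hT
  have h3 : x ^ 2 - A ≠ 0 := by
    intro h
    refine hTx ⟨Polynomial.X ^ 2 - Polynomial.C a,
      Polynomial.X_pow_sub_C_ne_zero (by norm_num) a, ?_⟩
    simp only [map_sub, map_pow, aeval_X, aeval_C]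
    rw [hA] at h
    exact h
  have hxb : x * b = C * x ^ 2 + D * x + C * A := by
    rw [hb]; field_simp; ring
  have hxbne : C * x ^ 2 + D * x + C * A ≠ 0 := by
    intro h
    refine hTx ⟨Polynomial.C c * Polynomial.X ^ 2 + Polynomial.C d * Polynomial.X +
      Polynomial.C (c * a), ?_, ?_⟩
    · intro hp
      apply hcd
      constructor
      · have h2' := congrArg (fun p => Polynomial.coeff p 2) hp
        simpa using h2'
      · have h1' := congrArg (fun p => Polynomial.coeff p 1) hp
        simpa using h1'
    · simp only [map_add, map_mul, map_pow, aeval_X, aeval_C]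
      rw [hA, hC, hD] at h
      linear_combination h
  have hbne : b ≠ 0 := by
    intro h
    apply hxbne
    rw [← hxb, h, mul_zero]
  have hQ : x ^ 3 * y ^ 2 - (A * C * x ^ 2 + A * D * x + A * A * C) ≠ 0 := by
    intro h
    have hxR : x ∈ Algebra.adjoin k ({x} : Set F) := Algebra.subset_adjoin rfl
    set R0 := Algebra.adjoin k ({x} : Set F) with hR0
    set xR : R0 := ⟨x, hxR⟩ with hxRdef
    refine hTy ⟨Polynomial.C (xR ^ 3) * Polynomial.X ^ 2 -
      Polynomial.C (algebraMap k R0 (a * c) * xR ^ 2 + algebraMap k R0 (a * d) * xR +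
        algebraMap k R0 (a * a * c)), ?_, ?_⟩
    · intro hp
      have hc2 := congrArg (fun p => Polynomial.coeff p 2) hp
      simp only [Polynomial.coeff_sub, Polynomial.coeff_C_mul, Polynomial.coeff_X_pow,
        Polynomial.coeff_C, Polynomial.coeff_zero, if_pos rfl] at hc2
      norm_num at hc2
      have hval : (x : F) ^ 3 = 0 := by
        have := congrArg (Subtype.val) hc2
        simp at this
        have hx0 : x = 0 := congrArg Subtype.val this
        simp [hx0]
      exact pow_ne_zero 3 h1 hval
    · have hxRcoe : (algebraMap R0 F) xR = x := rfl
      have hR0m : ∀ r : k, (algebraMap (Algebra.adjoin k ({x} : Set F)) F) (algebraMap k R0 r) = algebraMap k F r := fun r => rfl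
      have hxRcoe' : (algebraMap (Algebra.adjoin k ({x} : Set F)) F) xR = x := rfl
      simp only [map_sub, map_add, map_mul, map_pow, aeval_X, aeval_C,
        ← IsScalarTower.algebraMap_apply k R0 F, hxRcoe, hR0m, hxRcoe']
      rw [hA, hC, hD] at h
      linear_combination h
  have keyDd : x * (x ^ 2 * y ^ 2 - A * b) =
      x ^ 3 * y ^ 2 - (A * C * x ^ 2 + A * D * x + A * A * C) := by
    linear_combination (-A) * hxb
  have hDd : x ^ 2 * y ^ 2 - A * b ≠ 0 := by
    intro h
    apply hQ
    rw [← keyDd, h, mul_zero]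
  have skey : x * y - A * b / (x * y) = (x ^ 2 * y ^ 2 - A * b) / (x * y) := by
    field_simp
  have hs : x * y - A * b / (x * y) ≠ 0 := by
    rw [skey]
    exact div_ne_zero hDd (mul_ne_zero h1 h2)
  have hu1 : u * (x ^ 2 * y ^ 2 - A * b) = (x ^ 2 - A) * y := by
    have e : u = (x - A / x) * (x * y) / (x ^ 2 * y ^ 2 - A * b) := by
      rw [hu, skey, div_div_eq_mul_div]
    rw [e, div_mul_cancel₀ _ hDd]
    field_simp
  have hv1 : v * (x ^ 2 * y ^ 2 - A * b) = (y ^ 2 - b) * x := by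
    have e : v = (y - b / y) * (x * y) / (x ^ 2 * y ^ 2 - A * b) := by
      rw [hv, skey, div_div_eq_mul_div]
    rw [e, div_mul_cancel₀ _ hDd]
    field_simp
  have key6 : (x ^ 2 * y ^ 2 - A * b) * (1 - x * v) = b * (x ^ 2 - A) := by
    linear_combination (-x) * hv1
  have h6 : 1 - x * v ≠ 0 := by
    intro h
    rw [h, mul_zero] at key6
    exact (mul_ne_zero hbne h3) key6.symm
  have keyY : y * (1 - x * v) = u * b := by
    refine mul_right_cancel₀ hDd ?_
    linear_combination (-(x * y)) * hv1 + (-b) * hu1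
  have h7 : C * u ^ 2 + v ≠ 0 := by
    intro h
    have key7 : x ^ 2 * (x ^ 2 * y ^ 2 - A * b) ^ 2 * (C * u ^ 2 + v) =
        x ^ 5 * y ^ 4 - (D * x ^ 5 + 4 * (A * C) * x ^ 4 + A * D * x ^ 3) * y ^ 2 +
          A * x * (C * x ^ 2 + C * A + D * x) ^ 2 := by
      linear_combination (C * x ^ 2 * (u * (x ^ 2 * y ^ 2 - A * b) + (x ^ 2 - A) * y)) * hu1 +
        (x ^ 2 * (x ^ 2 * y ^ 2 - A * b)) * hv1 +
        (A * x * (C * x ^ 2 + C * A + D * x) + A * b * x ^ 2 -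
          x ^ 2 * y ^ 2 * (x ^ 2 + A)) * hxb
    rw [h, mul_zero] at key7
    have hxR : x ∈ Algebra.adjoin k ({x} : Set F) := Algebra.subset_adjoin rfl
    set R0 := Algebra.adjoin k ({x} : Set F) with hR0
    set xR : R0 := ⟨x, hxR⟩ with hxRdef
    refine hTy ⟨Polynomial.C (xR ^ 5) * Polynomial.X ^ 4 -
      Polynomial.C (algebraMap k R0 d * xR ^ 5 + 4 * algebraMap k R0 (a * c) * xR ^ 4 +
        algebraMap k R0 (a * d) * xR ^ 3) * Polynomial.X ^ 2 +
      Polynomial.C (algebraMap k R0 a * xR *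
        (algebraMap k R0 c * xR ^ 2 + algebraMap k R0 (c * a) + algebraMap k R0 d * xR) ^ 2),
      ?_, ?_⟩
    · intro hp
      have hc4 := congrArg (fun p => Polynomial.coeff p 4) hp
      simp only [Polynomial.coeff_add, Polynomial.coeff_sub, Polynomial.coeff_C_mul,
        Polynomial.coeff_X_pow, Polynomial.coeff_C, Polynomial.coeff_zero] at hc4
      norm_num at hc4
      have hval : (x : F) ^ 5 = 0 := by
        have := congrArg (Subtype.val) hc4
        simp at this
        have hx0 : x = 0 := congrArg Subtype.val this
        simp [hx0]
      exact pow_ne_zero 5 h1 hval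
    · have hxRcoe : (algebraMap R0 F) xR = x := rfl
      have hR0m : ∀ r : k, (algebraMap (Algebra.adjoin k ({x} : Set F)) F) (algebraMap k R0 r) = algebraMap k F r := fun r => rfl
      have hxRcoe' : (algebraMap (Algebra.adjoin k ({x} : Set F)) F) xR = x := rfl
      simp only [map_sub, map_add, map_mul, map_pow, map_ofNat, aeval_X, aeval_C,
        ← IsScalarTower.algebraMap_apply k R0 F, hxRcoe, hR0m, hxRcoe']
      rw [hA, hC, hD] at key7
      linear_combination -key7
  -- sigma computations
  have hσA : σ A = A := σ.commutes a
  have hσC : σ C = C := σ.commutes c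
  have hσD : σ D = D := σ.commutes d
  have hσb : σ b = b := by
    rw [hb]
    simp only [map_add, map_mul, map_div₀, hσA, hσC, hσD, hx]
    rw [show A / (A / x) = x by field_simp]
    ring
  have hσs : σ (x * y - A * b / (x * y)) = -(x * y - A * b / (x * y)) := by
    simp only [map_sub, map_mul, map_div₀, hσA, hσb, hx, hy]
    field_simp
    try ring
  have hσu : σ u = u := by
    rw [hu, map_div₀, hσs]
    have hnum : σ (x - A / x) = -(x - A / x) := by
      simp only [map_sub, map_div₀, hσA, hx]
      field_simp
      ring
    rw [hnum, neg_div_neg_eq]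
  have hσv : σ v = v := by
    rw [hv, map_div₀, hσs]
    have hnum : σ (y - b / y) = -(y - b / y) := by
      simp only [map_sub, map_div₀, hσb, hy]
      field_simp
      ring
    rw [hnum, neg_div_neg_eq]
  have hσ2 : σ * σ = 1 := by
    refine AlgEquiv.ext fun z => ?_
    rw [AlgEquiv.mul_apply, AlgEquiv.one_apply]
    have hz : z ∈ IntermediateField.adjoin k ({x, y} : Set F) := by rw [hadj]; trivial
    induction hz using IntermediateField.adjoin_induction with
    | mem w hw =>
      simp only [Set.mem_insert_iff, Set.mem_singleton_iff] at hw
      rcases hw with rfl | rfl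
      · rw [hx, map_div₀, hσA, hx]
        field_simp
      · rw [hy, map_div₀, hσb, hy]
        field_simp
    | algebraMap r => simp
    | add p q hp hq ihp ihq => rw [map_add, map_add, ihp, ihq]
    | inv p hp ihp => rw [map_inv₀, map_inv₀, ihp]
    | mul p q hp hq ihp ihq => rw [map_mul, map_mul, ihp, ihq]
  have hσne : σ ≠ 1 := by
    intro h
    rw [h] at hx
    simp only [AlgEquiv.one_apply] at hx
    apply h3
    have hxx : x * x = A := (eq_div_iff h1).mp hx
    rw [pow_two, hxx, sub_self]
  have hrank := aux_artin σ hσ2 hσne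
  -- the field K
  have humem : u ∈ IntermediateField.adjoin k ({u, v} : Set F) :=
    IntermediateField.subset_adjoin _ _ (Set.mem_insert _ _)
  have hvmem : v ∈ IntermediateField.adjoin k ({u, v} : Set F) :=
    IntermediateField.subset_adjoin _ _ (Set.mem_insert_of_mem _ rfl)
  set K := IntermediateField.adjoin k ({u, v} : Set F) with hK
  have hKL : K ≤ IntermediateField.fixedField (Subgroup.zpowers σ) := by
    have m1 := aux_fixmem σ u hσu
    have m2 := aux_fixmem σ v hσv
    refine IntermediateField.adjoin_le_iff.mpr ?_
    rintro w (rfl | rfl)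
    · exact m1
    · exact m2
  set uK : K := ⟨u, humem⟩ with huK
  set vK : K := ⟨v, hvmem⟩ with hvK
  set q : Polynomial K :=
    Polynomial.C (algebraMap k K c * uK ^ 2 + vK) *
        (Polynomial.X ^ 2 + Polynomial.C (algebraMap k K a)) +
      Polynomial.C (algebraMap k K d * uK ^ 2 - 1 - algebraMap k K a * vK ^ 2) *
        Polynomial.X with hq
  have hquad : (C * u ^ 2 + v) * (x ^ 2 + A) + (D * u ^ 2 - 1 - A * v ^ 2) * x = 0 := by
    have hqm : ((C * u ^ 2 + v) * (x ^ 2 + A) + (D * u ^ 2 - 1 - A * v ^ 2) * x) *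
        ((x ^ 2 * y ^ 2 - A * b) ^ 2 * x) = 0 := by
      linear_combination ((x * C * (x ^ 2 + A) + D * x ^ 2) *
          (u * (x ^ 2 * y ^ 2 - A * b) + (x ^ 2 - A) * y)) * hu1 +
        (x * (x ^ 2 + A) * (x ^ 2 * y ^ 2 - A * b) -
          A * x ^ 2 * (v * (x ^ 2 * y ^ 2 - A * b) + (y ^ 2 - b) * x)) * hv1 +
        (-(x * y ^ 2) * (x ^ 2 - A) ^ 2) * hxb
    rcases mul_eq_zero.mp hqm with h' | h'
    · exact h'
    · exact absurd h' (mul_ne_zero (pow_ne_zero 2 hDd) h1)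
  have haev : Polynomial.aeval x q = 0 := by
    rw [hq]
    simp only [map_add, map_sub, map_mul, map_one, map_pow, aeval_X, aeval_C,
      ← IsScalarTower.algebraMap_apply k K F,
      show (algebraMap K F) uK = u from rfl, show (algebraMap K F) vK = v from rfl]
    rw [hA, hC, hD] at hquad
    linear_combination hquad
  have hqne : q ≠ 0 := by
    intro h0
    apply h7
    have hc2 : (algebraMap k K c * uK ^ 2 + vK) = 0 := by
      have hco := congrArg (fun p => Polynomial.coeff p 2) h0
      simp only [hq, Polynomial.coeff_add, Polynomial.coeff_C_mul, Polynomial.coeff_X_pow,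
        Polynomial.coeff_C, Polynomial.coeff_X, Polynomial.coeff_zero] at hco
      norm_num at hco
      exact hco
    have hcF := congrArg (algebraMap K F) hc2
    simp only [map_add, map_mul, map_pow, map_zero,
      ← IsScalarTower.algebraMap_apply k K F,
      show (algebraMap K F) uK = u from rfl, show (algebraMap K F) vK = v from rfl] at hcF
    rw [hC]
    exact hcF
  have hdeg : q.natDegree ≤ 2 := by
    rw [hq]
    compute_degree
  have hyT : y ∈ IntermediateField.adjoin K ({x} : Set F) := by
    set T := IntermediateField.adjoin K ({x} : Set F) with hT
    have hxT : x ∈ T := IntermediateField.subset_adjoin K {x} rfl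
    have hAT : A ∈ T := by
      rw [hA, IsScalarTower.algebraMap_apply k K F]
      exact T.algebraMap_mem _
    have hCT : C ∈ T := by
      rw [hC, IsScalarTower.algebraMap_apply k K F]
      exact T.algebraMap_mem _
    have hDT : D ∈ T := by
      rw [hD, IsScalarTower.algebraMap_apply k K F]
      exact T.algebraMap_mem _
    have huT : u ∈ T := T.algebraMap_mem uK
    have hvT : v ∈ T := T.algebraMap_mem vK
    have hbT : b ∈ T := by
      rw [hb]
      exact add_mem (mul_mem hCT (add_mem hxT (div_mem hAT hxT))) hDT
    have hyform : y = u * b / (1 - x * v) := by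
      rw [eq_div_iff h6]
      exact keyY
    rw [hyform]
    exact div_mem (mul_mem huT hbT) (sub_mem (one_mem T) (mul_mem hxT hvT))
  exact (aux_finish K _ hKL hrank x y hadj q hqne hdeg haev hyT).symm
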